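/- For all integers m, n ≥ 10 with n ≡ 0 (mod 5), there is a Roman dominating function on the cylinder P_m □ C_n of weight 2(m+1)n/5; consequently γ_R(P_m □ C_n) ≤ 2(m+1)n/5. -/
import Mathlib


open SimpleGraph

/-- A Roman dominating function on `G`: every vertex with value `0` has a neighbor
with value `2`. -/
def IsRomanDominating {V : Type*} (G : SimpleGraph V) (f : V → Fin 3) : Prop :=
  ∀ v, f v = 0 → ∃ w, G.Adj v w ∧ f w = 2

/-- The Roman domination number of a finite graph: the minimum weight
`∑ v, f v` of a Roman dominating function on `G`. -/
noncomputable def romanDominationNumber {V : Type*} [Fintype V] (G : SimpleGraph V) : ℕ :=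
  sInf {k | ∃ f : V → Fin 3, IsRomanDominating G f ∧ ∑ v, (f v : ℕ) = k}

open Finset
def Fpat (m i c : ℕ) : Fin 3 :=
  if c = 2 * i % 5 then 2
  else if (i = 0 ∧ c = 3) ∨ (i = m - 1 ∧ c = 2 * m % 5) then 1 else 0

lemma Fpat_val (m i c : ℕ) :
    ((Fpat m i c : Fin 3) : ℕ) =
      if c = 2 * i % 5 then 2
      else if (i = 0 ∧ c = 3) ∨ (i = m - 1 ∧ c = 2 * m % 5) then 1 else 0 := by
  unfold Fpat
  split_ifs <;> rfl

lemma Fpat_eq_two (m i c : ℕ) (h : c = 2 * i % 5) : Fpat m i c = 2 := by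
  unfold Fpat; rw [if_pos h]

lemma sum_mod5 (g : ℕ → ℕ) (t : ℕ) :
    ∑ j ∈ range (5 * t), g (j % 5) = t * ∑ c ∈ range 5, g c := by
  induction t with
  | zero => simp
  | succ t ih =>
    have h : 5 * (t + 1) = 5 * t + 1 + 1 + 1 + 1 + 1 := by ring
    rw [h, Finset.sum_range_succ, Finset.sum_range_succ, Finset.sum_range_succ,
      Finset.sum_range_succ, Finset.sum_range_succ, ih]
    have h0 : (5 * t) % 5 = 0 := by omega
    have h1 : (5 * t + 1) % 5 = 1 := by omega
    have h2 : (5 * t + 1 + 1) % 5 = 2 := by omega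
    have h3 : (5 * t + 1 + 1 + 1) % 5 = 3 := by omega
    have h4 : (5 * t + 1 + 1 + 1 + 1) % 5 = 4 := by omega
    rw [h0, h1, h2, h3, h4]
    simp [Finset.sum_range_succ]
    ring

lemma row_sum (m i : ℕ) (him : i < m) (hm : 10 ≤ m) :
    ∑ c ∈ range 5, ((Fpat m i c : Fin 3) : ℕ) =
      if i = 0 ∨ i = m - 1 then 3 else 2 := by
  simp only [Fpat_val, Finset.sum_range_succ, Finset.sum_range_zero]
  by_cases hi0 : i = 0
  · subst hi0
    have hne : ¬ ((0:ℕ) = m - 1) := by omega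
    norm_num [hne]
  · by_cases him1 : i = m - 1
    · subst him1
      have hr : 2 * (m-1) % 5 = 0 ∨ 2 * (m-1) % 5 = 1 ∨ 2 * (m-1) % 5 = 2 ∨
          2 * (m-1) % 5 = 3 ∨ 2 * (m-1) % 5 = 4 := by omega
      rcases hr with hr | hr | hr | hr | hr <;>
        · have hs : 2 * m % 5 = (2 * (m-1) % 5 + 2) % 5 := by omega
          rw [hs, hr]
          norm_num [hi0]
    · have hr : 2 * i % 5 = 0 ∨ 2 * i % 5 = 1 ∨ 2 * i % 5 = 2 ∨
          2 * i % 5 = 3 ∨ 2 * i % 5 = 4 := by omega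
      rcases hr with hr | hr | hr | hr | hr <;>
        · rw [hr]; norm_num [hi0, him1]

/-- for `m, n ≥ 10` with `n ≡ 0 (mod 5)`, there is a Roman dominating
function on `P_m □ C_n` of weight `2(m+1)n/5` (the division is exact since `5 ∣ n`);
consequently `γ_R(P_m □ C_n) ≤ 2(m+1)n/5`. -/
theorem exists_isRomanDominating_weight_cylinder (m n : ℕ) (hm : 10 ≤ m) (hn : 10 ≤ n)
    (h5 : n % 5 = 0) :
    (∃ f : Fin m × Fin n → Fin 3,
        IsRomanDominating ((pathGraph m).boxProd (cycleGraph n)) f ∧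
        ∑ v, (f v : ℕ) = 2 * (m + 1) * n / 5) ∧
      romanDominationNumber ((pathGraph m).boxProd (cycleGraph n)) ≤ 2 * (m + 1) * n / 5 := by
  have hnz : NeZero n := ⟨by omega⟩
  set f : Fin m × Fin n → Fin 3 := fun v => Fpat m v.1.val (v.2.val % 5) with hf
  have hval1 : ((1 : Fin n) : ℕ) = 1 := by
    rw [Fin.val_one']; exact Nat.mod_eq_of_lt (by omega)
  have hresp : ∀ j : Fin n, ((j + 1 : Fin n) : ℕ) % 5 = (j.val + 1) % 5 := by
    intro j
    have h : ((j + 1 : Fin n) : ℕ) = (j.val + 1) % n := by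
      rw [Fin.add_def, hval1]
    rw [h, Nat.mod_mod_of_dvd _ (by omega : (5:ℕ) ∣ n)]
  have hresm : ∀ j : Fin n, ((j - 1 : Fin n) : ℕ) % 5 = (j.val + 4) % 5 := by
    intro j
    have h : ((j - 1 : Fin n) : ℕ) = ((n - 1) + j.val) % n := by
      rw [Fin.sub_def, hval1]
    rw [h, Nat.mod_mod_of_dvd _ (by omega : (5:ℕ) ∣ n)]
    omega
  have hdom : IsRomanDominating ((pathGraph m).boxProd (cycleGraph n)) f := by
    rintro ⟨i, j⟩ h0
    simp only [hf, Fpat] at h0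
    split_ifs at h0 with h1 h2
    · exact absurd h0 (by decide)
    · exact absurd h0 (by decide)
    have hr5 : j.val % 5 = 0 ∨ j.val % 5 = 1 ∨ j.val % 5 = 2 ∨ j.val % 5 = 3 ∨
        j.val % 5 = 4 := by omega
    have hs5 : 2 * i.val % 5 = 0 ∨ 2 * i.val % 5 = 1 ∨ 2 * i.val % 5 = 2 ∨
        2 * i.val % 5 = 3 ∨ 2 * i.val % 5 = 4 := by omega
    have him : i.val < m := i.isLt
    have hcase :
        (j.val + 4) % 5 = 2 * i.val % 5
      ∨ ((j.val % 5 = 2 * (i.val + 1) % 5) ∧ i.val + 1 < m)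
      ∨ ((j.val % 5 = 2 * (i.val - 1) % 5) ∧ i.val ≠ 0)
      ∨ (j.val + 1) % 5 = 2 * i.val % 5 := by
      rcases hr5 with h | h | h | h | h <;> rcases hs5 with g | g | g | g | g <;> omega
    rcases hcase with hc | ⟨hc, hlt⟩ | ⟨hc, hi0⟩ | hc
    · -- neighbor (i, j - 1)
      refine ⟨(i, j - 1), Or.inr ⟨?_, rfl⟩, ?_⟩
      · rw [cycleGraph_adj']
        left
        rw [sub_sub_cancel, hval1]
      · show Fpat m i.val ((j - 1 : Fin n).val % 5) = 2
        exact Fpat_eq_two m i.val _ (by rw [hresm j]; exact hc)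
    · -- neighbor (i + 1, j)
      refine ⟨(⟨i.val + 1, hlt⟩, j), Or.inl ⟨?_, rfl⟩, ?_⟩
      · rw [pathGraph_adj]; left; rfl
      · show Fpat m (i.val + 1) (j.val % 5) = 2
        exact Fpat_eq_two m (i.val + 1) _ hc
    · -- neighbor (i - 1, j)
      have hlt : i.val - 1 < m := by omega
      refine ⟨(⟨i.val - 1, hlt⟩, j), Or.inl ⟨?_, rfl⟩, ?_⟩
      · rw [pathGraph_adj]; right; simp; omega
      · show Fpat m (i.val - 1) (j.val % 5) = 2
        exact Fpat_eq_two m (i.val - 1) _ hc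
    · -- neighbor (i, j + 1)
      refine ⟨(i, j + 1), Or.inr ⟨?_, rfl⟩, ?_⟩
      · rw [cycleGraph_adj']
        right
        rw [add_comm, add_sub_cancel_right, hval1]
      · show Fpat m i.val ((j + 1 : Fin n).val % 5) = 2
        exact Fpat_eq_two m i.val _ (by rw [hresp j]; exact hc)
  obtain ⟨t, ht⟩ : ∃ t, n = 5 * t := ⟨n / 5, by omega⟩
  have hsum : ∑ v, (f v : ℕ) = 2 * (m + 1) * n / 5 := by
    rw [Fintype.sum_prod_type]
    have hrow : ∀ i : Fin m, ∑ j : Fin n, (f (i, j) : ℕ) =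
        t * (if i.val = 0 ∨ i.val = m - 1 then 3 else 2) := by
      intro i
      have h1 : ∑ j : Fin n, (f (i, j) : ℕ)
          = ∑ j ∈ range n, ((Fpat m i.val (j % 5) : Fin 3) : ℕ) :=
        Fin.sum_univ_eq_sum_range (fun j => ((Fpat m i.val (j % 5) : Fin 3) : ℕ)) n
      rw [h1, ht]
      exact (sum_mod5 (fun c => ((Fpat m i.val c : Fin 3) : ℕ)) t).trans
        (by rw [row_sum m i.val i.isLt hm])
    simp only [hrow]
    rw [← Finset.mul_sum]
    have h2 : ∑ i : Fin m, (if i.val = 0 ∨ i.val = m - 1 then 3 else 2)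
        = ∑ i ∈ range m, (if i = 0 ∨ i = m - 1 then 3 else 2) :=
      Fin.sum_univ_eq_sum_range (fun i => if i = 0 ∨ i = m - 1 then 3 else 2) m
    rw [h2]
    have hsplit : ∑ i ∈ range m, (if i = 0 ∨ i = m - 1 then 3 else 2)
        = ∑ i ∈ range m, (2 + (if i = 0 then 1 else 0) + (if i = m - 1 then 1 else 0)) := by
      apply Finset.sum_congr rfl
      intro i _
      by_cases h0 : i = 0 <;> by_cases h1 : i = m - 1 <;> simp [h0, h1] <;> omega
    rw [hsplit]
    rw [Finset.sum_add_distrib, Finset.sum_add_distrib, Finset.sum_const,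
      Finset.sum_ite_eq' (range m) 0 (fun _ => 1),
      Finset.sum_ite_eq' (range m) (m - 1) (fun _ => 1)]
    simp only [Finset.mem_range, card_range, smul_eq_mul]
    rw [if_pos (by omega), if_pos (by omega)]
    have h3 : 2 * (m + 1) * n = (t * (m * 2 + 1 + 1)) * 5 := by rw [ht]; ring
    rw [h3, Nat.mul_div_cancel _ (by norm_num)]
  exact ⟨⟨f, hdom, hsum⟩, Nat.sInf_le ⟨f, hdom, hsum⟩⟩
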